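/- Let f be the doubling map on the circle ℝ/ℤ, f(x) = 2x. For every integer n ≥ 2, the number of points x ∈ ℝ/ℤ whose minimal period under iteration of f is exactly n equals n times the number of Lyndon words of length n over the two-letter alphabet Bool. (Equivalently: the periodic orbits of exact period n of the doubling map are in bijection with the Lyndon words of length n over a two-letter alphabet.) -/

import Mathlib

/-- A nonempty list over a linearly ordered alphabet is a Lyndon word if it is
strictly smaller, in the lexicographic order, than all of its nontrivial rotations. -/
def IsLyndon {α : Type*} [LinearOrder α] (w : List α) : Prop :=
  w ≠ [] ∧ ∀ k, 0 < k → k < w.length → w < w.rotate k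

namespace DLyn

def bval : List Bool → ℕ
  | [] => 0
  | b :: t => (cond b 1 0) * 2 ^ t.length + bval t

lemma bval_nil : bval [] = 0 := rfl
lemma bval_cons (b : Bool) (t : List Bool) :
    bval (b :: t) = (cond b 1 0) * 2 ^ t.length + bval t := rfl

lemma bval_lt (w : List Bool) : bval w < 2 ^ w.length := by
  induction w with
  | nil => simp [bval_nil]
  | cons b t ih =>
    rw [bval_cons, List.length_cons, pow_succ]
    cases b <;> simp <;> omega

lemma bval_inj : ∀ {w w' : List Bool}, w.length = w'.length → bval w = bval w' → w = w'
  | [], [], _, _ => rfl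
  | b :: t, b' :: t', hl, hv => by
    simp only [List.length_cons, Nat.add_right_cancel_iff] at hl
    have h1 := bval_lt t
    have h2 := bval_lt t'
    rw [← hl] at h2
    rw [bval_cons, bval_cons, ← hl] at hv
    have hb : b = b' := by
      cases b <;> cases b' <;> simp at hv ⊢ <;> omega
    subst hb
    have : bval t = bval t' := by cases b <;> simp at hv <;> omega
    rw [bval_inj hl this]

lemma bval_zero : ∀ {w : List Bool}, bval w = 0 → w = List.replicate w.length false
  | [], _ => rfl
  | b :: t, h => by
    have h1 := bval_lt t
    rw [bval_cons] at h
    cases b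
    · simp only [List.length_cons, List.replicate_succ]
      have ht : bval t = 0 := by omega
      exact congrArg _ (bval_zero ht)
    · rw [show (cond true 1 0 : ℕ) = 1 from rfl] at h; omega

lemma bval_max : ∀ {w : List Bool}, bval w = 2 ^ w.length - 1 → w = List.replicate w.length true
  | [], _ => rfl
  | b :: t, h => by
    have h1 := bval_lt t
    have h2 : 0 < 2 ^ t.length := Nat.pow_pos (by norm_num)
    rw [bval_cons, List.length_cons, pow_succ] at h
    cases b
    · simp at h; omega
    · simp only [List.length_cons, List.replicate_succ]
      have ht : bval t = 2 ^ t.length - 1 := by simp at h; omega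
      exact congrArg _ (bval_max ht)

lemma bval_append_singleton : ∀ (t : List Bool) (b : Bool),
    bval (t ++ [b]) = 2 * bval t + cond b 1 0
  | [], b => by cases b <;> rfl
  | a :: t, b => by
    rw [List.cons_append, bval_cons, bval_append_singleton t b, bval_cons,
      List.length_append, List.length_cons]
    simp only [List.length_nil]
    rw [show t.length + (0 + 1) = t.length + 1 from rfl, pow_succ]
    ring

lemma bval_rotate_one (w : List Bool) (hw : w ≠ []) :
    ∃ c : ℤ, (bval (w.rotate 1) : ℤ) = 2 * bval w - c * (2 ^ w.length - 1) := by
  obtain ⟨b, t, rfl⟩ := List.exists_cons_of_ne_nil hw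
  refine ⟨cond b 1 0, ?_⟩
  have h1 : (b :: t).rotate 1 = t ++ [b] := by
    rw [List.rotate_cons_succ, List.rotate_zero]
  rw [h1, bval_append_singleton, bval_cons, List.length_cons]
  cases b <;> simp only [Bool.cond_false, Bool.cond_true] <;> push_cast <;> ring

def bdigits : ℕ → ℕ → List Bool
  | 0, _ => []
  | n + 1, k => (decide (2 ^ n ≤ k)) :: bdigits n (k % 2 ^ n)

lemma bdigits_length : ∀ n k, (bdigits n k).length = n
  | 0, _ => rfl
  | n + 1, k => by simp [bdigits, bdigits_length n]

lemma bval_bdigits : ∀ n k, k < 2 ^ n → bval (bdigits n k) = k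
  | 0, k, h => by simpa [bdigits, bval] using by omega
  | n + 1, k, h => by
    have h2 : 0 < 2 ^ n := Nat.pow_pos (by norm_num)
    have hm : k % 2 ^ n < 2 ^ n := Nat.mod_lt _ h2
    rw [pow_succ] at h
    show (cond (decide (2 ^ n ≤ k)) 1 0) * 2 ^ (bdigits n (k % 2 ^ n)).length
        + bval (bdigits n (k % 2 ^ n)) = k
    rw [bdigits_length, bval_bdigits n _ hm]
    rw [Bool.cond_decide]
    by_cases hk : 2 ^ n ≤ k
    · rw [if_pos hk]
      have : k % 2 ^ n = k - 2 ^ n := by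
        rw [Nat.mod_eq_sub_mod hk, Nat.mod_eq_of_lt (by omega)]
      omega
    · rw [if_neg hk]
      rw [Nat.mod_eq_of_lt (by omega)]
      omega

noncomputable def Phi (n : ℕ) (w : List Bool) : AddCircle (1 : ℝ) :=
  ((bval w : ℝ) / (2 ^ n - 1) : ℝ)

lemma coe_eq_coe (x y : ℝ) : (x : AddCircle (1:ℝ)) = y ↔ ∃ k : ℤ, x - y = k := by
  rw [QuotientAddGroup.eq_iff_sub_mem]
  simp only [AddSubgroup.mem_zmultiples_iff, zsmul_eq_mul, mul_one]
  constructor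
  · rintro ⟨k, hk⟩; exact ⟨k, hk.symm⟩
  · rintro ⟨k, hk⟩; exact ⟨k, hk.symm⟩

lemma two_pow_sub_one_pos {n : ℕ} (hn : 1 ≤ n) : (0:ℝ) < 2 ^ n - 1 := by
  have : (2:ℝ) ^ 1 ≤ 2 ^ n := pow_le_pow_right₀ (by norm_num) hn
  norm_num at this ⊢; linarith

lemma two_smul_Phi {n : ℕ} (hn : 1 ≤ n) (w : List Bool) (hw : w.length = n) :
    (2:ℤ) • Phi n w = Phi n (w.rotate 1) := by
  have hne : w ≠ [] := by rintro rfl; simp at hw; omega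
  obtain ⟨c, hc⟩ := bval_rotate_one w hne
  rw [hw] at hc
  have hm := two_pow_sub_one_pos hn
  show (((2:ℤ) • ((bval w : ℝ) / (2 ^ n - 1)) : ℝ) : AddCircle (1:ℝ)) = _
  rw [Phi, coe_eq_coe]
  refine ⟨c, ?_⟩
  have hcast : (bval (w.rotate 1) : ℝ) = 2 * bval w - c * (2 ^ n - 1) := by
    exact_mod_cast hc
  rw [hcast]
  push_cast
  rw [zsmul_eq_mul]; push_cast
  field_simp
  ring

lemma iterate_Phi {n : ℕ} (hn : 1 ≤ n) (w : List Bool) (hw : w.length = n) (k : ℕ) :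
    (fun y : AddCircle (1:ℝ) => (2:ℤ) • y)^[k] (Phi n w) = Phi n (w.rotate k) := by
  induction k with
  | zero => simp
  | succ k ih =>
    rw [Function.iterate_succ_apply', ih, two_smul_Phi hn _ (by rw [List.length_rotate]; exact hw),
      List.rotate_rotate]

lemma Phi_eq_cases {n : ℕ} (hn : 1 ≤ n) {w w' : List Bool} (hw : w.length = n)
    (hw' : w'.length = n) (h : Phi n w = Phi n w') :
    bval w = bval w' ∨ (bval w = 0 ∧ bval w' = 2 ^ n - 1) ∨
      (bval w = 2 ^ n - 1 ∧ bval w' = 0) := by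
  have hm := two_pow_sub_one_pos hn
  rw [Phi, Phi, coe_eq_coe] at h
  obtain ⟨k, hk⟩ := h
  have hk' : (bval w : ℝ) - bval w' = k * (2 ^ n - 1) := by
    field_simp at hk
    linarith
  have hZ : (bval w : ℤ) - bval w' = k * (2 ^ n - 1) := by exact_mod_cast hk'
  have h1 : bval w < 2 ^ n := hw ▸ bval_lt w
  have h2 : bval w' < 2 ^ n := hw' ▸ bval_lt w'
  have hM : (0:ℤ) < 2 ^ n - 1 := by
    have : (2:ℤ) ^ 1 ≤ 2 ^ n := pow_le_pow_right₀ (by norm_num) hn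
    norm_num at this; omega
  have hb1 : (bval w : ℤ) < 2 ^ n := by exact_mod_cast h1
  have hb2 : (bval w' : ℤ) < 2 ^ n := by exact_mod_cast h2
  have hk1 : k ≤ 1 := by nlinarith
  have hk2 : -1 ≤ k := by nlinarith
  have hcp : ((2 ^ n : ℕ) : ℤ) = 2 ^ n := by push_cast; rfl
  have hp : 1 ≤ 2 ^ n := Nat.one_le_two_pow
  interval_cases k <;> omega

def Pset (n : ℕ) : Set (List Bool) :=
  {w | w.length = n ∧ ∀ k, 0 < k → k < n → w.rotate k ≠ w}

def Cset (n : ℕ) : Set (List Bool) := {w | w.length = n ∧ IsLyndon w}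

lemma rotate_n {n : ℕ} {u : List Bool} (h : u.length = n) : u.rotate n = u := by
  rw [← h, List.rotate_length]

lemma mod_add_ne {n k j : ℕ} (hn : 0 < n) (hk : k < n) (hj1 : 0 < j) (hj2 : j < n) :
    (k + j) % n ≠ k := by
  intro hEq
  rcases Nat.lt_or_ge (k + j) n with hlt | hge
  · rw [Nat.mod_eq_of_lt hlt] at hEq; omega
  · rw [Nat.mod_eq_sub_mod hge, Nat.mod_eq_of_lt (by omega)] at hEq; omega

lemma rot_distinct {n : ℕ} {u : List Bool} (hu : u ∈ Pset n) {a b : ℕ}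
    (ha : a < n) (hb : b < n) (h : u.rotate a = u.rotate b) : a = b := by
  obtain ⟨hlen, hprim⟩ := hu
  rcases Nat.le_total a b with hab | hab
  · by_contra hne
    have h1 : (u.rotate a).rotate (n - a) = u := by
      rw [List.rotate_rotate, show a + (n - a) = n by omega, ← hlen, List.rotate_length]
    have h2 : (u.rotate b).rotate (n - a) = u.rotate (b - a) := by
      rw [List.rotate_rotate, show b + (n - a) = n + (b - a) by omega, ← List.rotate_rotate,
        ← hlen, List.rotate_length]
    rw [h] at h1
    rw [h2] at h1
    exact hprim (b - a) (by omega) (by omega) h1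
  · by_contra hne
    have h1 : (u.rotate b).rotate (n - b) = u := by
      rw [List.rotate_rotate, show b + (n - b) = n by omega, ← hlen, List.rotate_length]
    have h2 : (u.rotate a).rotate (n - b) = u.rotate (a - b) := by
      rw [List.rotate_rotate, show a + (n - b) = n + (a - b) by omega, ← List.rotate_rotate,
        ← hlen, List.rotate_length]
    rw [← h] at h1
    rw [h2] at h1
    exact hprim (a - b) (by omega) (by omega) h1

lemma lyndon_primitive {n : ℕ} {w : List Bool} (hw : w ∈ Cset n) : w ∈ Pset n := by
  obtain ⟨hlen, _, hlt⟩ := hw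
  exact ⟨hlen, fun k hk1 hk2 heq => absurd (hlt k hk1 (hlen ▸ hk2)) (by rw [heq]; exact lt_irrefl _)⟩

lemma psi_mapsTo {n : ℕ} (hn : 0 < n) {w : List Bool} (hw : w ∈ Cset n) {k : ℕ} (hk : k < n) :
    w.rotate k ∈ Pset n := by
  have hP := lyndon_primitive hw
  have hlen : w.length = n := hw.1
  refine ⟨by rw [List.length_rotate, hlen], fun j hj1 hj2 heq => ?_⟩
  rw [List.rotate_rotate] at heq
  have h1 : w.rotate ((k + j) % n) = w.rotate k := by
    rw [← heq, ← hlen, List.rotate_mod]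
  exact mod_add_ne hn hk hj1 hj2 (rot_distinct hP (Nat.mod_lt _ hn) hk h1)

lemma psi_injOn {n : ℕ} (hn : 0 < n) {w1 w2 : List Bool} (h1 : w1 ∈ Cset n) (h2 : w2 ∈ Cset n)
    {k1 k2 : ℕ} (hk1 : k1 < n) (hk2 : k2 < n) (h : w1.rotate k1 = w2.rotate k2) :
    w1 = w2 ∧ k1 = k2 := by
  have hl1 : w1.length = n := h1.1
  have hl2 : w2.length = n := h2.1
  have hP1 := lyndon_primitive h1
  have hP2 := lyndon_primitive h2
  have hw2 : w2 = w1.rotate ((k1 + (n - k2)) % n) := by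
    have : (w1.rotate k1).rotate (n - k2) = (w2.rotate k2).rotate (n - k2) := by rw [h]
    rw [List.rotate_rotate, List.rotate_rotate, show k2 + (n - k2) = n by omega,
      rotate_n hl2] at this
    rw [← hl1, List.rotate_mod, hl1, ← this]
  set a := (k1 + (n - k2)) % n with ha
  have han : a < n := Nat.mod_lt _ hn
  rcases Nat.eq_zero_or_pos a with ha0 | hapos
  · rw [ha0, List.rotate_zero] at hw2
    subst hw2
    exact ⟨rfl, rot_distinct hP1 hk1 hk2 h⟩
  · exfalso
    have hlt1 : w1 < w2 := by
      rw [hw2]; exact h1.2.2 a hapos (hl1 ▸ han)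
    have hw1 : w1 = w2.rotate (n - a) := by
      have : (w1.rotate a).rotate (n - a) = w1 := by
        rw [List.rotate_rotate, show a + (n - a) = n by omega, rotate_n hl1]
      rw [← hw2] at this
      exact this.symm
    have hlt2 : w2 < w1 := by
      rw [hw1]; exact h2.2.2 (n - a) (by omega) (hl2 ▸ by omega)
    exact absurd hlt2 (lt_asymm hlt1)

lemma psi_surjOn {n : ℕ} (hn : 0 < n) {u : List Bool} (hu : u ∈ Pset n) :
    ∃ w ∈ Cset n, ∃ k < n, w.rotate k = u := by
  have hlen : u.length = n := hu.1
  obtain ⟨k0, hk0mem, hmin⟩ := Finset.exists_min_image (Finset.range n) (fun k => u.rotate k)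
    ⟨0, Finset.mem_range.mpr hn⟩
  rw [Finset.mem_range] at hk0mem
  set w := u.rotate k0 with hwdef
  have hwlen : w.length = n := by rw [hwdef, List.length_rotate, hlen]
  have hwC : w ∈ Cset n := by
    refine ⟨hwlen, ?_, fun j hj1 hj2 => ?_⟩
    · intro hnil; rw [hnil] at hwlen; simp at hwlen; omega
    · rw [hwlen] at hj2
      have hrw : w.rotate j = u.rotate ((k0 + j) % n) := by
        rw [hwdef, List.rotate_rotate, ← hlen, List.rotate_mod]
      have hne : (k0 + j) % n ≠ k0 := mod_add_ne hn hk0mem hj1 hj2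
      have hler : w ≤ u.rotate ((k0 + j) % n) :=
        hmin _ (Finset.mem_range.mpr (Nat.mod_lt _ hn))
      have hner : w ≠ u.rotate ((k0 + j) % n) := by
        intro hEq
        exact hne (rot_distinct hu (Nat.mod_lt _ hn) hk0mem hEq.symm)
      rw [hrw]
      exact lt_of_le_of_ne hler hner
  refine ⟨w, hwC, (n - k0) % n, Nat.mod_lt _ hn, ?_⟩
  rcases Nat.eq_zero_or_pos k0 with h0 | hpos
  · subst h0; simp [hwdef]
  · rw [Nat.mod_eq_of_lt (by omega), hwdef, List.rotate_rotate,
      show k0 + (n - k0) = n by omega, rotate_n hlen]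

lemma ncard_Pset (n : ℕ) (hn : 0 < n) : (Pset n).ncard = n * (Cset n).ncard := by
  classical
  set S : Set (List Bool × ℕ) := (Cset n) ×ˢ (Set.Iio n) with hS
  have himg : Pset n = (fun p : List Bool × ℕ => p.1.rotate p.2) '' S := by
    ext u
    constructor
    · intro hu
      obtain ⟨w, hwC, k, hk, hrot⟩ := psi_surjOn hn hu
      exact ⟨(w, k), ⟨hwC, hk⟩, hrot⟩
    · rintro ⟨⟨w, k⟩, ⟨hwC, hk⟩, rfl⟩
      exact psi_mapsTo hn hwC hk
  have hinj : Set.InjOn (fun p : List Bool × ℕ => p.1.rotate p.2) S := by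
    rintro ⟨w1, k1⟩ ⟨hw1, hk1⟩ ⟨w2, k2⟩ ⟨hw2, hk2⟩ h
    obtain ⟨h1, h2⟩ := psi_injOn hn hw1 hw2 hk1 hk2 h
    exact Prod.ext h1 h2
  rw [himg, Set.ncard_image_of_injOn hinj]
  have : (S.ncard) = (Cset n).ncard * (Set.Iio n : Set ℕ).ncard := by
    rw [← Nat.card_coe_set_eq, ← Nat.card_coe_set_eq, ← Nat.card_coe_set_eq,
      Nat.card_congr (Equiv.Set.prod (Cset n) (Set.Iio n)), Nat.card_prod]
  rw [this, ← Finset.coe_range, Set.ncard_coe_finset, Finset.card_range, Nat.mul_comm]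

noncomputable abbrev dbl : AddCircle (1:ℝ) → AddCircle (1:ℝ) := fun y => (2:ℤ) • y

/-- A word in `Pset n` is not a replicate. -/
lemma not_replicate {n : ℕ} (hn : 2 ≤ n) {w : List Bool} (hw : w ∈ Pset n) (b : Bool) :
    w ≠ List.replicate w.length b := by
  intro h
  exact hw.2 1 one_pos (by omega) (by rw [h, List.rotate_replicate])

lemma Phi_injOn {n : ℕ} (hn : 2 ≤ n) {w w' : List Bool} (hw : w ∈ Pset n) (hw' : w' ∈ Pset n)
    (h : Phi n w = Phi n w') : w = w' := by
  rcases Phi_eq_cases (by omega) hw.1 hw'.1 h with h0 | ⟨h1, _⟩ | ⟨h1, _⟩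
  · exact bval_inj (by rw [hw.1, hw'.1]) h0
  · exact absurd (bval_zero h1) (not_replicate hn hw false)
  · exact absurd (bval_max (by rw [hw.1]; exact hw.1 ▸ h1)) (not_replicate hn hw true)

lemma minimalPeriod_Phi {n : ℕ} (hn : 2 ≤ n) {w : List Bool} (hw : w ∈ Pset n) :
    Function.minimalPeriod dbl (Phi n w) = n := by
  have hn1 : 1 ≤ n := by omega
  have hper : Function.IsPeriodicPt dbl n (Phi n w) := by
    show dbl^[n] (Phi n w) = Phi n w
    rw [iterate_Phi hn1 w hw.1, ← hw.1, List.rotate_length]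
  have hdvd := hper.minimalPeriod_dvd
  have hpos : 0 < Function.minimalPeriod dbl (Phi n w) :=
    hper.minimalPeriod_pos (by omega)
  set d := Function.minimalPeriod dbl (Phi n w) with hd
  have hdle : d ≤ n := Nat.le_of_dvd (by omega) hdvd
  rcases eq_or_lt_of_le hdle with hEq | hlt
  · exact hEq
  · exfalso
    have hiter : dbl^[d] (Phi n w) = Phi n w := Function.isPeriodicPt_minimalPeriod dbl _
    rw [iterate_Phi hn1 w hw.1] at hiter
    have hrl : (w.rotate d).length = n := by rw [List.length_rotate, hw.1]
    rcases Phi_eq_cases hn1 hrl hw.1 hiter with h0 | ⟨_, h1⟩ | ⟨_, h1⟩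
    · exact hw.2 d hpos hlt (bval_inj (by rw [hrl, hw.1]) h0)
    · exact absurd (bval_max (by rw [hw.1]; exact h1)) (not_replicate hn hw true)
    · exact absurd (bval_zero h1) (not_replicate hn hw false)

lemma A_eq_image {n : ℕ} (hn : 2 ≤ n) :
    {x : AddCircle (1:ℝ) | Function.minimalPeriod dbl x = n} = Phi n '' (Pset n) := by
  have hn1 : 1 ≤ n := by omega
  ext x
  constructor
  · intro hx
    have hper : Function.IsPeriodicPt dbl n x := by
      rw [← hx]; exact Function.isPeriodicPt_minimalPeriod dbl x
    obtain ⟨r, rfl⟩ := QuotientAddGroup.mk_surjective x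
    have hfix : (((2:ℤ)^n) • (r : AddCircle (1:ℝ))) = (r : AddCircle (1:ℝ)) := by
      rw [← congrFun (smul_iterate (2:ℤ) n) (r : AddCircle (1:ℝ))]
      exact hper
    have hfix2 : (((2:ℝ)^n * r : ℝ) : AddCircle (1:ℝ)) = (r : ℝ) := by
      have : (((2:ℤ)^n • r : ℝ) : AddCircle (1:ℝ)) = (r : ℝ) := hfix
      rwa [zsmul_eq_mul, show (((2:ℤ)^n : ℤ) : ℝ) = (2:ℝ)^n by push_cast; ring] at this
    rw [coe_eq_coe] at hfix2
    obtain ⟨j, hj⟩ := hfix2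
    have hM : (0:ℝ) < 2 ^ n - 1 := by
      have : (2:ℝ) ^ 1 ≤ 2 ^ n := pow_le_pow_right₀ (by norm_num) hn1
      norm_num at this; linarith
    have hr : r = j / (2 ^ n - 1) := by field_simp; linarith
    set M : ℤ := 2 ^ n - 1 with hMdef
    have hMpos : 0 < M := by
      have : (2:ℤ) ^ 1 ≤ 2 ^ n := pow_le_pow_right₀ (by norm_num) hn1
      simp at this; omega
    set k : ℤ := j % M with hk
    have hk0 : 0 ≤ k := Int.emod_nonneg j (by omega)
    have hkM : k < M := Int.emod_lt_of_pos j hMpos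
    have hklt : k.toNat < 2 ^ n := by
      have h2 : (2:ℤ)^n = ((2^n : ℕ) : ℤ) := by push_cast; ring
      omega
    set w := bdigits n k.toNat with hwdef
    have hwlen : w.length = n := bdigits_length n _
    have hwval : bval w = k.toNat := bval_bdigits n _ hklt
    have hPhix : Phi n w = (r : AddCircle (1:ℝ)) := by
      rw [Phi, coe_eq_coe]
      refine ⟨-(j / M), ?_⟩
      have hjk : (k : ℝ) = (j:ℝ) - (j / M : ℤ) * M := by
        have : j = M * (j / M) + k := (Int.mul_ediv_add_emod j M).symm
        have := congrArg (fun z : ℤ => (z : ℝ)) this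
        push_cast at this ⊢
        linarith
      have hbv : (bval w : ℝ) = (k : ℝ) := by
        rw [hwval]
        exact_mod_cast congrArg (fun z : ℤ => (z : ℝ)) (Int.toNat_of_nonneg hk0)
      have hMr : ((M : ℤ) : ℝ) = 2 ^ n - 1 := by rw [hMdef]; push_cast; ring
      rw [hbv, hjk, hr, hMr]
      field_simp
      push_cast; ring
    refine ⟨w, ⟨hwlen, fun d hd1 hd2 hrot => ?_⟩, hPhix⟩
    have hiter : dbl^[d] (Phi n w) = Phi n w := by
      rw [iterate_Phi hn1 w hwlen d, hrot]
    rw [hPhix] at hiter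
    have : n ∣ d := by
      rw [← hx]
      exact Function.IsPeriodicPt.minimalPeriod_dvd hiter
    have := Nat.le_of_dvd hd1 this
    omega
  · rintro ⟨w, hwP, rfl⟩
    exact minimalPeriod_Phi hn hwP


end DLyn

/-- For every `n ≥ 2`, the number of points of the circle `ℝ/ℤ` of
minimal period exactly `n` under the doubling map `x ↦ 2x` equals `n` times the
number of Lyndon words of length `n` over the two-letter alphabet `Bool`. -/
theorem doubling_map_periodic_points_eq_lyndon_words (n : ℕ) (hn : 2 ≤ n) :
    Set.ncard {x : AddCircle (1 : ℝ) |
        Function.minimalPeriod (fun y : AddCircle (1 : ℝ) => (2 : ℤ) • y) x = n} =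
      n * Set.ncard {w : List Bool | w.length = n ∧ IsLyndon w} := by
  have h1 : {x : AddCircle (1 : ℝ) |
      Function.minimalPeriod (fun y : AddCircle (1 : ℝ) => (2 : ℤ) • y) x = n} =
      DLyn.Phi n '' (DLyn.Pset n) := DLyn.A_eq_image hn
  rw [h1, Set.ncard_image_of_injOn (fun w hw w' hw' h => DLyn.Phi_injOn hn hw hw' h)]
  exact DLyn.ncard_Pset n (by omega)
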